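/- Let A, B, C be ωcpos, let f₀, f₁ : A → B be continuous maps, and let c : B → C be a coinserter of (f₀, f₁) in the sense of ωcpos and continuous maps. Then the image of c is ω-dense in C. -/

import Mathlib

open OmegaCompletePartialOrder

universe u

/-- A subset `S` of an ωcpo `P` is a sub-ωcpo if it is closed under suprema of ω-chains
contained in it. -/
def IsSubOmegaCpo {P : Type u} [OmegaCompletePartialOrder P] (S : Set P) : Prop :=
  ∀ c : Chain P, (∀ i ∈ c, i ∈ S) → ωSup c ∈ S

/-- A subset `X` of an ωcpo `P` is ω-dense if the only sub-ωcpo of `P` containing `X` is `P`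
itself. -/
def OmegaDense {P : Type u} [OmegaCompletePartialOrder P] (X : Set P) : Prop :=
  ∀ S : Set P, IsSubOmegaCpo S → X ⊆ S → S = Set.univ

/-- `IsOmegaCoinserter f₀ f₁ c` says that the continuous map `c : B → C` is a coinserter of
the parallel pair of continuous maps `f₀, f₁ : A → B` in the category of ωcpos and
continuous maps. -/
def IsOmegaCoinserter {A B C : Type u}
    [OmegaCompletePartialOrder A] [OmegaCompletePartialOrder B] [OmegaCompletePartialOrder C]
    (f₀ f₁ : A → B) (c : B → C) : Prop :=
  ωScottContinuous c ∧
  (∀ a, c (f₀ a) ≤ c (f₁ a)) ∧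
  (∀ (D : Type u) (_ : OmegaCompletePartialOrder D) (g : B → D), ωScottContinuous g →
    (∀ a, g (f₀ a) ≤ g (f₁ a)) → ∃ h : C → D, ωScottContinuous h ∧ ∀ b, g b = h (c b)) ∧
  (∀ (D : Type u) (_ : OmegaCompletePartialOrder D) (u₀ v₀ : C → D),
    ωScottContinuous u₀ → ωScottContinuous v₀ →
    (∀ b, u₀ (c b) ≤ v₀ (c b)) → ∀ x, u₀ x ≤ v₀ x)

/-- Every coinserter `c : B → C` of a parallel pair of continuous maps `f₀, f₁ : A → B`
between ωcpos has ω-dense image. -/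
theorem omega_coinserter_image_omegaDense {A B C : Type u}
    [OmegaCompletePartialOrder A] [OmegaCompletePartialOrder B] [OmegaCompletePartialOrder C]
    (f₀ f₁ : A → B) (hf₀ : ωScottContinuous f₀) (hf₁ : ωScottContinuous f₁)
    (c : B → C) (hc : IsOmegaCoinserter f₀ f₁ c) :
    OmegaDense (Set.range c) := by
  intro S hS hsub
  obtain ⟨hcont, hle, hfact, hrefl⟩ := hc
  -- T : least sub-ωcpo containing range c
  set p : C → Prop := fun x => ∀ S' : Set C, IsSubOmegaCpo S' → Set.range c ⊆ S' → x ∈ S' with hp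
  have hpclosed : ∀ ch : Chain C, (∀ i ∈ ch, p i) → p (ωSup ch) := by
    intro ch hch S' hS' hsub'
    exact hS' ch fun i hi => hch i hi S' hS' hsub'
  have hpc : ∀ b, p (c b) := fun b S' _ hsub' => hsub' ⟨b, rfl⟩
  letI : OmegaCompletePartialOrder (Subtype p) :=
    OmegaCompletePartialOrder.subtype p hpclosed
  have hval : ωScottContinuous (Subtype.val : Subtype p → C) := by
    apply ωScottContinuous.of_monotone_map_ωSup
    exact ⟨fun a b h => h, fun ch => rfl⟩
  -- g : B → Subtype p
  set g : B → Subtype p := fun b => ⟨c b, hpc b⟩ with hg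
  have hgmono : Monotone g := fun a b h => hcont.monotone h
  have hgcont : ωScottContinuous g := by
    apply ωScottContinuous.of_monotone_map_ωSup
    refine ⟨hgmono, fun ch => ?_⟩
    apply Subtype.ext
    have := hcont.map_ωSup ch
    exact this
  obtain ⟨h, hhcont, hhfact⟩ := hfact (Subtype p) _ g hgcont (fun a => hle a)
  have key : ∀ x, (h x).val = x := by
    have h1 : ∀ x, (Subtype.val ∘ h) x ≤ id x := by
      apply hrefl C _ _ _ (hval.comp hhcont) ωScottContinuous.id
      intro b
      simp only [Function.comp_apply, id_eq, ← hhfact b]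
      exact le_rfl
    have h2 : ∀ x, id x ≤ (Subtype.val ∘ h) x := by
      apply hrefl C _ _ _ ωScottContinuous.id (hval.comp hhcont)
      intro b
      simp only [Function.comp_apply, id_eq, ← hhfact b]
      exact le_rfl
    exact fun x => le_antisymm (h1 x) (h2 x)
  apply Set.eq_univ_of_forall
  intro x
  have := (h x).property S hS hsub
  rwa [key x] at this
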